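/- arXiv:2403.04003 — 2 statements merged into one kernel-verified Lean document; each statement's English description precedes it below -/
import Mathlib

section
/- Let N ≥ 1 and let 1 ≤ j ≤ m. Let B : ℝ → Matrix(N×N, ℝ) be a C^m family of symmetric matrices, and let u ∈ ℝ^N satisfy B(0)u = 0 and ⟨u, B^{(i)}(0) u⟩ = 0 for every i = 1, …, j−1, where B^{(i)} denotes the i-th entrywise derivative of B in t. Let P : ℝ → Matrix(N×N, ℝ) be a continuously differentiable family of matrices such that each P_t is an orthogonal projection (P_tᵀ = P_t and P_t² = P_t) and P₀ u = u. Then lim_{t→0, t≠0} j!·⟨P_{t^j} u, t^{−j} B(t) P_{t^j} u⟩ = ⟨u, B^{(j)}(0) u⟩. -/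
open Matrix Filter

lemma myIteratedDeriv_add {n : ℕ} {f g : ℝ → ℝ} (hf : ContDiff ℝ (n : ℕ∞) f)
    (hg : ContDiff ℝ (n : ℕ∞) g) (x : ℝ) :
    iteratedDeriv n (fun t => f t + g t) x = iteratedDeriv n f x + iteratedDeriv n g x := by
  have h := iteratedDerivWithin_add (Set.mem_univ x) uniqueDiffOn_univ
    (f := f) (g := g) hf.contDiffWithinAt hg.contDiffWithinAt
  simpa [iteratedDerivWithin_univ, Pi.add_def] using h

lemma myIteratedDeriv_sum {ι : Type*} {n : ℕ} (s : Finset ι) (f : ι → ℝ → ℝ)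
    (h : ∀ i ∈ s, ContDiff ℝ (n : ℕ∞) (f i)) (x : ℝ) :
    iteratedDeriv n (fun t => ∑ i ∈ s, f i t) x = ∑ i ∈ s, iteratedDeriv n (f i) x := by
  classical
  induction s using Finset.induction_on with
  | empty =>
    have hd : deriv (fun _ : ℝ => (0:ℝ)) = fun _ => 0 := deriv_const' 0
    simp [iteratedDeriv_eq_iterate, Function.iterate_fixed hd]
  | @insert a s ha ih =>
    simp only [Finset.sum_insert ha]
    have h1 : ContDiff ℝ (n : ℕ∞) (f a) := h a (Finset.mem_insert_self a s)
    have h2 : ContDiff ℝ (n : ℕ∞) (fun t => ∑ i ∈ s, f i t) :=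
      ContDiff.sum fun i hi => h i (Finset.mem_insert_of_mem hi)
    rw [myIteratedDeriv_add h1 h2, ih (fun i hi => h i (Finset.mem_insert_of_mem hi))]

lemma myIteratedDeriv_cmul {n : ℕ} (c : ℝ) {f : ℝ → ℝ} (hf : ContDiff ℝ (n : ℕ∞) f) (x : ℝ) :
    iteratedDeriv n (fun t => c * f t) x = c * iteratedDeriv n f x := by
  have h := iteratedDerivWithin_const_mul (Set.mem_univ x) uniqueDiffOn_univ c hf.contDiffWithinAt
  simpa [iteratedDerivWithin_univ] using h

lemma peano_limit (n : ℕ) (f : ℝ → ℝ) (hf : ContDiff ℝ (n : ℕ∞) f)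
    (h0 : ∀ i < n, iteratedDeriv i f 0 = 0) :
    Filter.Tendsto (fun t => f t / t ^ n) (nhdsWithin 0 {0}ᶜ)
      (nhds (iteratedDeriv n f 0 / n.factorial)) := by
  induction n generalizing f with
  | zero =>
    simpa [iteratedDeriv_zero] using
      ((hf.continuous.tendsto 0).mono_left nhdsWithin_le_nhds)
  | succ n ih =>
    have hf' : ContDiff ℝ ((n : WithTop ℕ∞) + 1) f := by exact_mod_cast hf
    rw [contDiff_succ_iff_deriv] at hf'
    obtain ⟨hdiff, -, hder'⟩ := hf'
    have hder : ContDiff ℝ ((n : ℕ) : ℕ∞) (deriv f) := by exact_mod_cast hder'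
    have hf0 : f 0 = 0 := by simpa [iteratedDeriv_zero] using h0 0 (Nat.succ_pos n)
    have hder0 : ∀ i < n, iteratedDeriv i (deriv f) 0 = 0 := by
      intro i hi
      have := h0 (i + 1) (by omega)
      rwa [iteratedDeriv_succ'] at this
    have hIH := ih (deriv f) hder hder0
    have hlim : Filter.Tendsto (fun x => deriv f x / deriv (fun y : ℝ => y ^ (n + 1)) x)
        (nhdsWithin 0 {0}ᶜ) (nhds (iteratedDeriv (n + 1) f 0 / (n + 1).factorial)) := by
      have heq : ∀ x : ℝ, deriv f x / deriv (fun y : ℝ => y ^ (n + 1)) x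
          = (deriv f x / x ^ n) / (n + 1) := by
        intro x
        rw [deriv_pow_field, div_div]
        push_cast
        ring
      simp only [heq]
      have := hIH.div_const ((n : ℝ) + 1)
      rw [iteratedDeriv_succ']
      convert this using 2
      rw [Nat.factorial_succ]
      push_cast
      rw [div_div]
      ring_nf
    apply deriv.lhopital_zero_nhdsNE
    · exact Filter.Eventually.of_forall fun x => hdiff x
    · filter_upwards [self_mem_nhdsWithin] with x hx
      rw [deriv_pow_field]
      have : x ≠ 0 := hx
      positivity
    · have : Filter.Tendsto f (nhds 0) (nhds 0) := by
        simpa [hf0] using hdiff.continuous.tendsto 0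
      exact this.mono_left nhdsWithin_le_nhds
    · have : Filter.Tendsto (fun x : ℝ => x ^ (n + 1)) (nhds 0) (nhds 0) := by
        simpa using (continuous_pow (n + 1)).tendsto (0:ℝ)
      exact this.mono_left nhdsWithin_le_nhds
    · exact hlim

/-- The `i`-th entrywise derivative of a family of matrices. -/
noncomputable def entryDeriv (N : ℕ) (B : ℝ → Matrix (Fin N) (Fin N) ℝ) (i : ℕ) (t : ℝ) :
    Matrix (Fin N) (Fin N) ℝ :=
  Matrix.of fun a b => iteratedDeriv i (fun s => B s a b) t

/-- The key limit: if `B` is a `C^m` family of symmetric matrices, `u ∈ ker B(0)`,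
`⟨u, B^{(i)}(0) u⟩ = 0` for `i = 1, …, j-1`, and `P_t` is a C¹ family of orthogonal
projections with `P₀ u = u`, then
`j! ⟨P_{t^j} u, t^{-j} B(t) P_{t^j} u⟩ → ⟨u, B^{(j)}(0) u⟩` as `t → 0`, `t ≠ 0`. -/
theorem stmt_3 (N m j : ℕ) (hN : 1 ≤ N) (hj : 1 ≤ j) (hjm : j ≤ m)
    (B : ℝ → Matrix (Fin N) (Fin N) ℝ)
    (hB : ∀ a b, ContDiff ℝ (m : ℕ∞) fun t => B t a b)
    (hsymm : ∀ t, (B t).IsSymm)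
    (u : Fin N → ℝ)
    (hu0 : (B 0) *ᵥ u = 0)
    (hui : ∀ i, 1 ≤ i → i < j → u ⬝ᵥ ((entryDeriv N B i 0) *ᵥ u) = 0)
    (P : ℝ → Matrix (Fin N) (Fin N) ℝ)
    (hP : ∀ a b, ContDiff ℝ 1 fun t => P t a b)
    (hproj : ∀ t, (P t)ᵀ = P t ∧ P t * P t = P t)
    (hPu : (P 0) *ᵥ u = u) :
    Filter.Tendsto
      (fun t : ℝ => (j.factorial : ℝ) *
        (((P (t ^ j)) *ᵥ u) ⬝ᵥ ((t ^ j)⁻¹ • ((B t) *ᵥ ((P (t ^ j)) *ᵥ u)))))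
      (nhdsWithin 0 {0}ᶜ)
      (nhds (u ⬝ᵥ ((entryDeriv N B j 0) *ᵥ u))) := by
  classical
  have hm : 1 ≤ m := le_trans hj hjm
  have hBdiff : ∀ a b, Differentiable ℝ fun t => B t a b :=
    fun a b => (hB a b).differentiable (by exact_mod_cast (by omega : m ≠ 0))
  have hPdiff : ∀ a b, Differentiable ℝ fun t => P t a b :=
    fun a b => (hP a b).differentiable one_ne_zero
  have hrepr : ∀ M : Matrix (Fin N) (Fin N) ℝ,
      u ⬝ᵥ (M *ᵥ u) = ∑ a, ∑ b, (u a * u b) * M a b := by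
    intro M
    simp only [dotProduct, mulVec, Finset.mul_sum]
    exact Finset.sum_congr rfl fun a _ => Finset.sum_congr rfl fun b _ => by ring
  -- the scalar function f
  have hfderiv : ∀ i, i ≤ j → iteratedDeriv i (fun t => u ⬝ᵥ (B t *ᵥ u)) 0
      = u ⬝ᵥ ((entryDeriv N B i 0) *ᵥ u) := by
    intro i hi
    have hBi : ∀ a b, ContDiff ℝ ((i : ℕ) : ℕ∞) fun t => B t a b :=
      fun a b => (hB a b).of_le (by exact_mod_cast le_trans hi hjm)
    have h1 : (fun t => u ⬝ᵥ (B t *ᵥ u)) = fun t => ∑ a, ∑ b, (u a * u b) * B t a b :=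
      funext fun t => hrepr (B t)
    rw [h1, myIteratedDeriv_sum _ _
      (fun a _ => ContDiff.sum fun b _ => contDiff_const.mul (hBi a b)) 0, hrepr (entryDeriv N B i 0)]
    refine Finset.sum_congr rfl fun a _ => ?_
    rw [myIteratedDeriv_sum _ _ (fun b _ => contDiff_const.mul (hBi a b)) 0]
    refine Finset.sum_congr rfl fun b _ => ?_
    rw [myIteratedDeriv_cmul _ (hBi a b)]
    rfl
  have hvanish : ∀ i < j, iteratedDeriv i (fun t => u ⬝ᵥ (B t *ᵥ u)) 0 = 0 := by
    intro i hi
    rcases Nat.eq_zero_or_pos i with h | h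
    · subst h
      rw [hfderiv 0 (le_of_lt hi)]
      have hE : entryDeriv N B 0 0 = B 0 := by
        ext a b; simp [entryDeriv, iteratedDeriv_zero]
      rw [hE, hu0, dotProduct_zero]
    · rw [hfderiv i (le_of_lt hi)]; exact hui i h hi
  have hfCj : ContDiff ℝ ((j : ℕ) : ℕ∞) (fun t => u ⬝ᵥ (B t *ᵥ u)) := by
    have h1 : (fun t => u ⬝ᵥ (B t *ᵥ u)) = fun t => ∑ a, ∑ b, (u a * u b) * B t a b :=
      funext fun t => hrepr (B t)
    rw [h1]
    have hBj : ∀ a b : Fin N, ContDiff ℝ ((j : ℕ) : ℕ∞) fun t => B t a b :=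
      fun a b => (hB a b).of_le (by exact_mod_cast hjm)
    exact ContDiff.sum fun a _ => ContDiff.sum fun b _ => contDiff_const.mul (hBj a b)
  have hfact : (j.factorial : ℝ) ≠ 0 := Nat.cast_ne_zero.mpr j.factorial_ne_zero
  have hT1 : Filter.Tendsto (fun t => (j.factorial : ℝ) * ((u ⬝ᵥ (B t *ᵥ u)) / t ^ j))
      (nhdsWithin 0 {0}ᶜ) (nhds (u ⬝ᵥ ((entryDeriv N B j 0) *ᵥ u))) := by
    have h := (peano_limit j _ hfCj hvanish).const_mul (j.factorial : ℝ)
    rw [hfderiv j le_rfl] at h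
    have hval : (j.factorial : ℝ) * ((u ⬝ᵥ ((entryDeriv N B j 0) *ᵥ u)) / j.factorial)
        = u ⬝ᵥ ((entryDeriv N B j 0) *ᵥ u) := by field_simp
    rwa [hval] at h
  -- auxiliary limits
  have hcomp : Filter.Tendsto (fun t : ℝ => t ^ j) (nhdsWithin 0 {0}ᶜ)
      (nhdsWithin 0 {0}ᶜ) := by
    rw [tendsto_nhdsWithin_iff]
    constructor
    · have h : Filter.Tendsto (fun t : ℝ => t ^ j) (nhds 0) (nhds 0) := by
        simpa [zero_pow (by omega : j ≠ 0)] using (continuous_pow j).tendsto (0 : ℝ)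
      exact h.mono_left nhdsWithin_le_nhds
    · filter_upwards [self_mem_nhdsWithin] with t ht
      simp only [Set.mem_compl_iff, Set.mem_singleton_iff] at ht ⊢
      exact pow_ne_zero j ht
  have hslope : ∀ g : ℝ → ℝ, DifferentiableAt ℝ g 0 →
      Filter.Tendsto (fun t => (g t - g 0) / t) (nhdsWithin 0 {0}ᶜ) (nhds (deriv g 0)) := by
    intro g hg
    have h := hasDerivAt_iff_tendsto_slope.mp hg.hasDerivAt
    exact h.congr fun t => by rw [slope_def_field, sub_zero]
  have hW : ∀ a : Fin N, ∃ L : ℝ, Filter.Tendsto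
      (fun t : ℝ => ((P (t ^ j) *ᵥ u - u) a) / t ^ j) (nhdsWithin 0 {0}ᶜ) (nhds L) := by
    intro a
    refine ⟨∑ b, deriv (fun s => P s a b) 0 * u b, ?_⟩
    have hterm : ∀ b : Fin N, Filter.Tendsto
        (fun t : ℝ => (P (t ^ j) a b - P 0 a b) / t ^ j * u b)
        (nhdsWithin 0 {0}ᶜ) (nhds (deriv (fun s => P s a b) 0 * u b)) := by
      intro b
      have h1 := (hslope (fun s => P s a b) ((hPdiff a b) 0)).comp hcomp
      exact h1.mul_const (u b)
    have hsum := tendsto_finset_sum Finset.univ fun b (_ : b ∈ Finset.univ) => hterm b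
    refine hsum.congr fun t => ?_
    have hwa : (P (t ^ j) *ᵥ u - u) a = ∑ b, (P (t ^ j) a b - P 0 a b) * u b := by
      have hP0 : (P (t ^ j) *ᵥ u - u) = (P (t ^ j) *ᵥ u - P 0 *ᵥ u) := by rw [hPu]
      rw [hP0]
      simp [mulVec, dotProduct, ← Finset.sum_sub_distrib, sub_mul]
    rw [hwa, Finset.sum_div]
    exact Finset.sum_congr rfl fun b _ => by ring
  have hC : ∀ a : Fin N, ∃ L : ℝ, Filter.Tendsto
      (fun t : ℝ => (B t *ᵥ u) a / t) (nhdsWithin 0 {0}ᶜ) (nhds L) := by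
    intro a
    have hg : Differentiable ℝ (fun t => (B t *ᵥ u) a) := by
      simp only [mulVec, dotProduct]
      exact Differentiable.fun_sum fun b _ => (hBdiff a b).mul_const _
    have h := hslope (fun t => (B t *ᵥ u) a) (hg 0)
    refine ⟨_, h.congr fun t => ?_⟩
    have h0 : (B 0 *ᵥ u) a = 0 := by rw [hu0]; rfl
    simp only [h0, sub_zero]
  have hBc : ∀ a b, Filter.Tendsto (fun t => B t a b) (nhdsWithin 0 {0}ᶜ) (nhds (B 0 a b)) :=
    fun a b => ((hBdiff a b).continuous.tendsto 0).mono_left nhdsWithin_le_nhds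
  have hid : Filter.Tendsto (fun t : ℝ => t) (nhdsWithin 0 {0}ᶜ) (nhds 0) :=
    tendsto_id.mono_left nhdsWithin_le_nhds
  have htj : Filter.Tendsto (fun t : ℝ => t ^ j) (nhdsWithin 0 {0}ᶜ) (nhds 0) :=
    hcomp.mono_right nhdsWithin_le_nhds
  -- cross terms
  have hT2 : Filter.Tendsto
      (fun t : ℝ => ((B t *ᵥ u) ⬝ᵥ (P (t ^ j) *ᵥ u - u)) / t ^ j)
      (nhdsWithin 0 {0}ᶜ) (nhds 0) := by
    have hterm : ∀ a : Fin N, Filter.Tendsto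
        (fun t : ℝ => ((B t *ᵥ u) a / t) * (((P (t ^ j) *ᵥ u - u) a) / t ^ j) * t)
        (nhdsWithin 0 {0}ᶜ) (nhds 0) := by
      intro a
      obtain ⟨L1, h1⟩ := hC a
      obtain ⟨L2, h2⟩ := hW a
      simpa using (h1.mul h2).mul hid
    have hsum : Filter.Tendsto
        (fun t : ℝ => ∑ a, ((B t *ᵥ u) a / t) * (((P (t ^ j) *ᵥ u - u) a) / t ^ j) * t)
        (nhdsWithin 0 {0}ᶜ) (nhds 0) := by
      simpa using tendsto_finset_sum Finset.univ fun a (_ : a ∈ Finset.univ) => hterm a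
    refine hsum.congr' ?_
    filter_upwards [self_mem_nhdsWithin] with t ht
    have ht' : t ≠ 0 := ht
    have htj' : t ^ j ≠ 0 := pow_ne_zero j ht'
    rw [dotProduct, Finset.sum_div]
    refine Finset.sum_congr rfl fun a _ => ?_
    field_simp
  have hT3 : Filter.Tendsto
      (fun t : ℝ => ((P (t ^ j) *ᵥ u - u) ⬝ᵥ (B t *ᵥ u)) / t ^ j)
      (nhdsWithin 0 {0}ᶜ) (nhds 0) := by
    refine hT2.congr fun t => ?_
    rw [dotProduct_comm]
  have hT4 : Filter.Tendsto
      (fun t : ℝ => ((P (t ^ j) *ᵥ u - u) ⬝ᵥ (B t *ᵥ (P (t ^ j) *ᵥ u - u))) / t ^ j)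
      (nhdsWithin 0 {0}ᶜ) (nhds 0) := by
    have hterm : ∀ a b : Fin N, Filter.Tendsto
        (fun t : ℝ => (((P (t ^ j) *ᵥ u - u) a) / t ^ j) * B t a b
          * (((P (t ^ j) *ᵥ u - u) b) / t ^ j) * t ^ j)
        (nhdsWithin 0 {0}ᶜ) (nhds 0) := by
      intro a b
      obtain ⟨La, ha⟩ := hW a
      obtain ⟨Lb, hb⟩ := hW b
      simpa using ((ha.mul (hBc a b)).mul hb).mul htj
    have hsum : Filter.Tendsto
        (fun t : ℝ => ∑ a, ∑ b, (((P (t ^ j) *ᵥ u - u) a) / t ^ j) * B t a b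
          * (((P (t ^ j) *ᵥ u - u) b) / t ^ j) * t ^ j)
        (nhdsWithin 0 {0}ᶜ) (nhds 0) := by
      simpa using tendsto_finset_sum Finset.univ fun a (_ : a ∈ Finset.univ) =>
        tendsto_finset_sum Finset.univ fun b (_ : b ∈ Finset.univ) => hterm a b
    refine hsum.congr' ?_
    filter_upwards [self_mem_nhdsWithin] with t ht
    have ht' : t ≠ 0 := ht
    have htj' : t ^ j ≠ 0 := pow_ne_zero j ht'
    rw [dotProduct, Finset.sum_div]
    refine Finset.sum_congr rfl fun a _ => ?_
    simp only [mulVec, dotProduct, Finset.mul_sum, Finset.sum_div]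
    refine Finset.sum_congr rfl fun b _ => ?_
    field_simp
  -- assemble
  have hG : Filter.Tendsto
      (fun t : ℝ => (j.factorial : ℝ) * ((u ⬝ᵥ (B t *ᵥ u)) / t ^ j)
        + ((j.factorial : ℝ) * (((B t *ᵥ u) ⬝ᵥ (P (t ^ j) *ᵥ u - u)) / t ^ j)
          + (j.factorial : ℝ) * (((P (t ^ j) *ᵥ u - u) ⬝ᵥ (B t *ᵥ u)) / t ^ j)
          + (j.factorial : ℝ) * (((P (t ^ j) *ᵥ u - u) ⬝ᵥ (B t *ᵥ (P (t ^ j) *ᵥ u - u))) / t ^ j)))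
      (nhdsWithin 0 {0}ᶜ)
      (nhds (u ⬝ᵥ ((entryDeriv N B j 0) *ᵥ u))) := by
    have h := hT1.add (((hT2.const_mul (j.factorial : ℝ)).add
      (hT3.const_mul (j.factorial : ℝ))).add (hT4.const_mul (j.factorial : ℝ)))
    simpa [add_assoc] using h
  refine hG.congr' ?_
  filter_upwards [self_mem_nhdsWithin] with t ht
  have ht' : t ≠ 0 := ht
  have hsym : u ⬝ᵥ (B t *ᵥ (P (t ^ j) *ᵥ u - u))
      = (B t *ᵥ u) ⬝ᵥ (P (t ^ j) *ᵥ u - u) := by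
    rw [dotProduct_mulVec, ← mulVec_transpose, (hsymm t).eq]
  have hexp : (P (t ^ j) *ᵥ u) ⬝ᵥ (B t *ᵥ (P (t ^ j) *ᵥ u))
      = u ⬝ᵥ (B t *ᵥ u)
        + ((B t *ᵥ u) ⬝ᵥ (P (t ^ j) *ᵥ u - u)
          + (P (t ^ j) *ᵥ u - u) ⬝ᵥ (B t *ᵥ u)
          + (P (t ^ j) *ᵥ u - u) ⬝ᵥ (B t *ᵥ (P (t ^ j) *ᵥ u - u))) := by
    have hv : P (t ^ j) *ᵥ u = u + (P (t ^ j) *ᵥ u - u) := by abel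
    calc (P (t ^ j) *ᵥ u) ⬝ᵥ (B t *ᵥ (P (t ^ j) *ᵥ u))
        = (u + (P (t ^ j) *ᵥ u - u)) ⬝ᵥ (B t *ᵥ (u + (P (t ^ j) *ᵥ u - u))) := by
          rw [← hv]
      _ = _ := by
          rw [mulVec_add, add_dotProduct, dotProduct_add, dotProduct_add, hsym]
          ring
  rw [dotProduct_smul, smul_eq_mul, hexp]
  ring
end

section
/- Let a, λ ∈ ℝ with a < 0 and λ ≥ 0, and let B_∞ be the 4×4 real matrix [[0,0,0,1],[0,0,1,−2],[−λ−1+a,0,0,0],[0,1,0,0]]. Then B_∞ is hyperbolic: every eigenvalue z ∈ ℂ of B_∞ (regarded as a matrix over ℂ) has nonzero real part. -/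
open Matrix

/-- The asymptotic coefficient matrix `B_∞(λ)` of the linearized Swift–Hohenberg equation
(with `a = f'(0)`). -/
def Binf (a lam : ℝ) : Matrix (Fin 4) (Fin 4) ℝ :=
  !![0, 0, 0, 1;
     0, 0, 1, -2;
     -lam - 1 + a, 0, 0, 0;
     0, 1, 0, 0]

/-- If `a < 0` and `λ ≥ 0`, then `B_∞(λ)` is hyperbolic: every complex eigenvalue has
nonzero real part. -/
theorem stmt_6 (a lam : ℝ) (ha : a < 0) (hlam : 0 ≤ lam) :
    ∀ z ∈ spectrum ℂ ((Binf a lam).map Complex.ofReal), z.re ≠ 0 := by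
  intro z hz hre
  rw [spectrum.mem_iff] at hz
  have hM : (algebraMap ℂ (Matrix (Fin 4) (Fin 4) ℂ) z) - (Binf a lam).map Complex.ofReal =
      !![z, 0, 0, -1; 0, z, -1, 2; (lam : ℂ) + 1 - a, 0, z, 0; 0, -1, 0, z] := by
    ext i j
    fin_cases i <;> fin_cases j <;>
      simp [Binf, Matrix.algebraMap_eq_diagonal, Matrix.diagonal, Matrix.vecHead, Matrix.vecTail] <;> push_cast <;> ring
  have hdet : (!![z, 0, 0, -1; 0, z, -1, 2; (lam : ℂ) + 1 - a, 0, z, 0; 0, -1, 0, z]).det = 0 := by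
    rw [← hM]
    by_contra h
    exact hz ((Matrix.isUnit_iff_isUnit_det _).2 (isUnit_iff_ne_zero.2 h))
  rw [Matrix.det_succ_row_zero] at hdet
  simp [Fin.sum_univ_succ, Matrix.det_fin_three, Fin.castSucc, Fin.castAdd, Fin.castLE] at hdet
  simp [show (Fin.succAbove 3 2 : Fin 4) = 2 by decide] at hdet
  have hre' : z = z.im * Complex.I := by
    apply Complex.ext <;> simp [hre]
  rw [hre'] at hdet
  have h2 : (z.im^4 - 2*z.im^2 + (lam + 1 - a) : ℂ) = 0 := by
    rw [← hdet]
    push_cast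
    ring_nf
    simp [Complex.I_sq]
    ring
  have h3 : (z.im^4 - 2*z.im^2 + (lam + 1 - a) : ℝ) = 0 := by
    exact_mod_cast h2
  nlinarith [sq_nonneg (z.im^2 - 1)]
end
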